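/- For probability measures: a mixed Poisson measure μ_{λ,σ} = ∫ π_{zσ} λ(dz) (σ an infinite, σ-finite diffuse measure) is an extreme point of the convex set of mixed Poisson measures with intensity proportional to σ if and only if λ = δ_z for some z ∈ [0,∞), i.e., the extreme points are exactly the pure Poisson measures π_{zσ}. -/

import Mathlib

open MeasureTheory ProbabilityTheory
open scoped ENNReal NNReal

/-- `π` is a Poisson point process with intensity `σ`: a probability measure on the
space of (configuration) measures on `X` such that for every measurable set `A` of finite
intensity the number of points in `A` is Poisson distributed with mean `σ A`, and the
counts on pairwise disjoint measurable sets are independent. -/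
def IsPoissonPP {X : Type*} [MeasurableSpace X] (σ : Measure X)
    (π : Measure (Measure X)) : Prop :=
  IsProbabilityMeasure π ∧
  (∀ A : Set X, MeasurableSet A → σ A ≠ ⊤ → ∀ k : ℕ,
      π {γ : Measure X | γ A = k} =
        ENNReal.ofReal (Real.exp (-(σ A).toReal) * (σ A).toReal ^ k / (Nat.factorial k))) ∧
  (∀ (ι : Type) (A : ι → Set X), (∀ i, MeasurableSet (A i)) →
      Pairwise (Function.onFun Disjoint A) →
      iIndepFun (fun i (γ : Measure X) => γ (A i)) π)
/-- `μ` is an extreme point of the set `S` of (probability) measures. -/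
def MeasureExtremePoint {Ω : Type*} [MeasurableSpace Ω] (S : Set (Measure Ω))
    (μ : Measure Ω) : Prop :=
  μ ∈ S ∧ ∀ μ₁ ∈ S, ∀ μ₂ ∈ S, ∀ t : ℝ≥0∞, 0 < t → t < 1 →
    μ = t • μ₁ + (1 - t) • μ₂ → μ₁ = μ ∧ μ₂ = μ

open Filter Set
open scoped Topology

lemma aux_eq_dirac {α : Type*} [MeasurableSpace α] [MeasurableSingletonClass α]
    (μ : Measure α) [IsProbabilityMeasure μ] {z : α} (h : μ {z} = 1) : μ = Measure.dirac z := by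
  ext s hs
  rw [Measure.dirac_apply' _ hs]
  by_cases hz : z ∈ s
  · have h1 : μ s ≤ 1 := prob_le_one
    have h2 : (1 : ℝ≥0∞) ≤ μ s := h ▸ measure_mono (singleton_subset_iff.2 hz)
    simp [le_antisymm h1 h2, Set.indicator_of_mem hz]
  · have hc : μ ({z}ᶜ) = 0 := by
      rw [prob_compl_eq_one_sub (MeasurableSet.singleton z), h, tsub_self]
    have : μ s = 0 := measure_mono_null (by simpa [Set.subset_compl_singleton_iff] using hz) hc
    simp [this, Set.indicator_of_notMem hz]

lemma aux_zero_one (lam : Measure ℝ≥0) [IsProbabilityMeasure lam]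
    (h : ∀ B : Set ℝ≥0, MeasurableSet B → lam B = 0 ∨ lam B = 1) :
    ∃ z : ℝ≥0, lam = Measure.dirac z := by
  set s : Set ℝ≥0 := {q | lam (Set.Iic q) = 1} with hs
  have hne : s.Nonempty := by
    by_contra hemp
    rw [Set.not_nonempty_iff_eq_empty] at hemp
    have hall : ∀ n : ℕ, lam (Set.Iic (n : ℝ≥0)) = 0 := by
      intro n
      rcases h _ measurableSet_Iic with h0 | h1
      · exact h0
      · exact absurd (show ((n:ℝ≥0)) ∈ s from h1) (by simp [hemp])
    have hu : (⋃ n : ℕ, Set.Iic ((n : ℝ≥0))) = Set.univ := by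
      ext x; simp only [Set.mem_iUnion, Set.mem_Iic, Set.mem_univ, iff_true]
      obtain ⟨n, hn⟩ := exists_nat_ge x; exact ⟨n, hn⟩
    have := measure_iUnion_null_iff.2 hall
    rw [hu] at this
    simp [measure_univ] at this
  set z := sInf s with hz
  have hup : ∀ q, z < q → lam (Set.Iic q) = 1 := by
    intro q hq
    obtain ⟨r, hr, hrq⟩ := exists_lt_of_csInf_lt hne hq
    have : (1:ℝ≥0∞) ≤ lam (Set.Iic q) := hr ▸ measure_mono (Set.Iic_subset_Iic.2 hrq.le)
    exact le_antisymm prob_le_one this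
  have hIic : lam (Set.Iic z) = 1 := by
    have hinter : Set.Iic z = ⋂ n : ℕ, Set.Iic (z + ((n : ℝ≥0)+1)⁻¹) := by
      ext x
      simp only [Set.mem_Iic, Set.mem_iInter]
      constructor
      · intro hx n; exact hx.trans (le_add_of_nonneg_right zero_le)
      · intro hx
        rw [← NNReal.coe_le_coe]
        refine le_of_forall_pos_le_add fun ε hε => ?_
        obtain ⟨n, hn⟩ := exists_nat_one_div_lt hε
        have := hx n
        rw [← NNReal.coe_le_coe] at this
        push_cast at this
        refine this.trans ?_
        have : ((n:ℝ)+1)⁻¹ ≤ ε := by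
          rw [one_div] at hn
          exact (hn.le)
        linarith
    have hcompl : lam ((Set.Iic z)ᶜ) = 0 := by
      rw [hinter, Set.compl_iInter]
      refine measure_iUnion_null fun n => ?_
      have h1 : lam (Set.Iic (z + ((n : ℝ≥0)+1)⁻¹)) = 1 :=
        hup _ (lt_add_of_pos_right _ (by positivity))
      have := prob_compl_eq_one_sub (μ := lam) (measurableSet_Iic (a := z + ((n : ℝ≥0)+1)⁻¹))
      rw [h1, tsub_self] at this
      exact this
    have := prob_compl_eq_one_sub (μ := lam) (measurableSet_Iic (a := z))
    rw [hcompl] at this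
    rcases h _ measurableSet_Iic with h0 | h1
    · rw [h0] at this; simp at this
    · exact h1
  have hIio : lam (Set.Iio z) = 0 := by
    rcases eq_or_lt_of_le (show (0:ℝ≥0) ≤ z from zero_le) with hz0 | hz0
    · rw [← hz0]
      convert measure_empty (μ := lam)
      ext x; simp
    · have hsub : Set.Iio z ⊆ ⋃ n : ℕ, Set.Iic (z - ((n : ℝ≥0)+1)⁻¹) := by
        intro x hx
        simp only [Set.mem_Iio] at hx
        have hpos : 0 < z - x := tsub_pos_of_lt hx
        obtain ⟨n, hn⟩ := exists_nat_one_div_lt (by exact_mod_cast hpos : (0:ℝ) < ((z - x : ℝ≥0) : ℝ))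
        simp only [Set.mem_iUnion, Set.mem_Iic]
        refine ⟨n, ?_⟩
        have hlt : ((n : ℝ≥0)+1)⁻¹ < z - x := by
          rw [← NNReal.coe_lt_coe]
          push_cast
          rw [one_div] at hn
          exact hn
        refine le_tsub_of_add_le_right ?_
        calc x + ((n : ℝ≥0)+1)⁻¹ ≤ x + (z - x) := by
              exact add_le_add le_rfl hlt.le
          _ = z := by rw [add_tsub_cancel_of_le hx.le]
      refine measure_mono_null hsub (measure_iUnion_null fun n => ?_)
      have hlt : z - ((n : ℝ≥0)+1)⁻¹ < z := tsub_lt_self hz0 (by positivity)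
      rcases h _ measurableSet_Iic with h0 | h1
      · exact h0
      · exact absurd (csInf_le (OrderBot.bddBelow s) h1) (not_le.2 hlt)
  have hsing : lam {z} = 1 := by
    have hsplit : Set.Iic z = Set.Iio z ∪ {z} := by
      ext x; simp [le_iff_lt_or_eq]
    have : (1:ℝ≥0∞) ≤ lam (Set.Iio z) + lam {z} := by
      calc (1:ℝ≥0∞) = lam (Set.Iic z) := hIic.symm
        _ ≤ lam (Set.Iio z) + lam {z} := hsplit ▸ measure_union_le _ _
    rw [hIio, zero_add] at this
    exact le_antisymm prob_le_one this
  exact ⟨z, aux_eq_dirac lam hsing⟩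

lemma aux_sierpinski {X : Type*} [MeasurableSpace X] [StandardBorelSpace X]
    (μ : Measure X) [NullSingletonClass μ] {s : Set X} (hs : MeasurableSet s) (hfin : μ s ≠ ⊤)
    {r : ℝ≥0∞} (hr : r ≤ μ s) : ∃ t, t ⊆ s ∧ MeasurableSet t ∧ μ t = r := by
  rcases eq_or_ne r 0 with rfl | hr0
  · exact ⟨∅, empty_subset _, MeasurableSet.empty, measure_empty⟩
  rcases eq_or_lt_of_le hr with rfl | hrlt
  · exact ⟨s, subset_rfl, hs, rfl⟩
  obtain ⟨f, hf⟩ := exists_measurableEmbedding_real X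
  set ν : Measure ℝ := Measure.map f (μ.restrict s) with hν
  have hνapp : ∀ u : Set ℝ, MeasurableSet u → ν u = μ (s ∩ f ⁻¹' u) := by
    intro u hu
    rw [hν, Measure.map_apply hf.measurable hu, Measure.restrict_apply (hf.measurable hu),
      Set.inter_comm]
  have hνatom : ∀ y : ℝ, ν {y} = 0 := by
    intro y
    rw [hνapp _ (MeasurableSet.singleton y)]
    have hsub : (f ⁻¹' {y}).Subsingleton := fun a ha b hb => hf.injective (by
      simp only [Set.mem_preimage, Set.mem_singleton_iff] at ha hb; rw [ha, hb])
    exact measure_mono_null Set.inter_subset_right (hsub.measure_zero μ)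
  have hνle : ∀ u : Set ℝ, MeasurableSet u → ν u ≤ μ s := by
    intro u hu; rw [hνapp u hu]; exact measure_mono Set.inter_subset_left
  have hνfin : ∀ u : Set ℝ, MeasurableSet u → ν u ≠ ⊤ :=
    fun u hu h => hfin (top_le_iff.1 (h ▸ hνle u hu))
  have hνuniv : ν Set.univ = μ s := by
    rw [hνapp _ MeasurableSet.univ]; simp
  set E : Set ℝ := {x | r ≤ ν (Set.Iic x)} with hE
  have hmono : ∀ ⦃a b : ℝ⦄, a ≤ b → ν (Set.Iic a) ≤ ν (Set.Iic b) :=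
    fun a b hab => measure_mono (Set.Iic_subset_Iic.2 hab)
  have hEne : E.Nonempty := by
    have hun : (⋃ n : ℕ, Set.Iic ((n : ℝ))) = Set.univ := by
      ext x; simp only [Set.mem_iUnion, Set.mem_Iic, Set.mem_univ, iff_true]
      obtain ⟨n, hn⟩ := exists_nat_ge x; exact ⟨n, hn⟩
    have hsup : ν (⋃ n : ℕ, Set.Iic ((n : ℝ))) = ⨆ n : ℕ, ν (Set.Iic (n : ℝ)) :=
      Directed.measure_iUnion (fun a b => by
        rcases le_total a b with hab | hab
        exacts [⟨b, Set.Iic_subset_Iic.2 (by exact_mod_cast hab), le_rfl⟩,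
          ⟨a, le_rfl, Set.Iic_subset_Iic.2 (by exact_mod_cast hab)⟩])
    rw [hun, hνuniv] at hsup
    obtain ⟨n, hn⟩ := lt_iSup_iff.1 (hsup ▸ hrlt)
    exact ⟨(n : ℝ), hn.le⟩
  have hbdd : BddBelow E := by
    have h0 : Tendsto (fun n : ℕ => ν (Set.Iic (-(n : ℝ)))) atTop
        (𝓝 (ν (⋂ n : ℕ, Set.Iic (-(n : ℝ))))) := by
      exact tendsto_measure_iInter_atTop (fun n => measurableSet_Iic.nullMeasurableSet)
        (fun a b hab => Set.Iic_subset_Iic.2 (neg_le_neg (Nat.cast_le.2 hab)))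
        ⟨0, hνfin _ measurableSet_Iic⟩
    have hempty : (⋂ n : ℕ, Set.Iic (-(n : ℝ))) = ∅ := by
      ext x
      simp only [Set.mem_iInter, Set.mem_Iic, Set.mem_empty_iff_false, iff_false, not_forall, not_le]
      obtain ⟨n, hn⟩ := exists_nat_gt (-x)
      exact ⟨n, by linarith⟩
    rw [hempty, measure_empty] at h0
    obtain ⟨n, hn⟩ := (h0.eventually_lt_const (pos_iff_ne_zero.2 hr0)).exists
    refine ⟨-(n:ℝ), fun x hx => ?_⟩
    by_contra hlt
    push_neg at hlt
    exact absurd (lt_of_le_of_lt (le_trans hx (hmono hlt.le)) hn) (lt_irrefl r)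
  set x₀ := sInf E with hx₀
  have hge : r ≤ ν (Set.Iic x₀) := by
    have htend : Tendsto (fun n : ℕ => ν (Set.Iic (x₀ + 1/((n:ℝ)+1)))) atTop
        (𝓝 (ν (⋂ n : ℕ, Set.Iic (x₀ + 1/((n:ℝ)+1))))) := by
      refine tendsto_measure_iInter_atTop (fun n => measurableSet_Iic.nullMeasurableSet)
        (fun a b hab => Set.Iic_subset_Iic.2 ?_) ⟨0, hνfin _ measurableSet_Iic⟩
      have : 1/((b:ℝ)+1) ≤ 1/((a:ℝ)+1) := by
        apply one_div_le_one_div_of_le (by positivity)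
        exact_mod_cast add_le_add_left (Nat.cast_le.2 hab) 1
      linarith
    have hIic : (⋂ n : ℕ, Set.Iic (x₀ + 1/((n:ℝ)+1))) = Set.Iic x₀ := by
      ext x
      simp only [Set.mem_iInter, Set.mem_Iic]
      constructor
      · intro hx
        refine le_of_forall_pos_le_add fun ε hε => ?_
        obtain ⟨n, hn⟩ := exists_nat_one_div_lt hε
        exact (hx n).trans (by linarith [hn.le])
      · intro hx n; have : (0:ℝ) < 1/((n:ℝ)+1) := by positivity
        linarith
    rw [hIic] at htend
    refine ge_of_tendsto htend (Eventually.of_forall fun n => ?_)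
    obtain ⟨e, he, helt⟩ := exists_lt_of_csInf_lt hEne
      (show x₀ < x₀ + 1/((n:ℝ)+1) by
        have h : (0:ℝ) < 1/((n:ℝ)+1) := by positivity
        linarith)
    exact le_trans he (hmono helt.le)
  have hle : ν (Set.Iic x₀) ≤ r := by
    have hio : ν (Set.Iio x₀) ≤ r := by
      have hun : Set.Iio x₀ = ⋃ n : ℕ, Set.Iic (x₀ - 1/((n:ℝ)+1)) := by
        ext x
        simp only [Set.mem_Iio, Set.mem_iUnion, Set.mem_Iic]
        constructor
        · intro hx
          obtain ⟨n, hn⟩ := exists_nat_one_div_lt (show (0:ℝ) < x₀ - x by linarith)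
          exact ⟨n, by linarith⟩
        · rintro ⟨n, hn⟩
          have : (0:ℝ) < 1/((n:ℝ)+1) := by positivity
          linarith
      have hsup : ν (⋃ n : ℕ, Set.Iic (x₀ - 1/((n:ℝ)+1))) =
          ⨆ n : ℕ, ν (Set.Iic (x₀ - 1/((n:ℝ)+1))) := by
        refine Directed.measure_iUnion (fun a b => ?_)
        rcases le_total a b with hab | hab
        · refine ⟨b, Set.Iic_subset_Iic.2 (by
            have : 1/((b:ℝ)+1) ≤ 1/((a:ℝ)+1) := one_div_le_one_div_of_le (by positivity)
              (by exact_mod_cast add_le_add_left (Nat.cast_le.2 hab) 1)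
            linarith), le_rfl⟩
        · refine ⟨a, le_rfl, Set.Iic_subset_Iic.2 (by
            have : 1/((a:ℝ)+1) ≤ 1/((b:ℝ)+1) := one_div_le_one_div_of_le (by positivity)
              (by exact_mod_cast add_le_add_left (Nat.cast_le.2 hab) 1)
            linarith)⟩
      rw [hun, hsup]
      refine iSup_le fun n => ?_
      have hnot : (x₀ - 1/((n:ℝ)+1)) ∉ E := fun hmem => by
        have : x₀ ≤ x₀ - 1/((n:ℝ)+1) := csInf_le hbdd hmem
        have hpos : (0:ℝ) < 1/((n:ℝ)+1) := by positivity
        linarith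
      exact (not_le.1 hnot).le
    calc ν (Set.Iic x₀) ≤ ν (Set.Iio x₀) + ν {x₀} := by
          rw [show Set.Iic x₀ = Set.Iio x₀ ∪ {x₀} by ext x; simp [le_iff_lt_or_eq]]
          exact measure_union_le _ _
      _ = ν (Set.Iio x₀) := by rw [hνatom, add_zero]
      _ ≤ r := hio
  refine ⟨s ∩ f ⁻¹' (Set.Iic x₀), Set.inter_subset_left,
    hs.inter (hf.measurable measurableSet_Iic), ?_⟩
  rw [← hνapp _ measurableSet_Iic]
  exact le_antisymm hle hge

lemma aux_unit_sets {X : Type*} [MeasurableSpace X] [StandardBorelSpace X]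
    (σ : Measure X) [SigmaFinite σ] [NullSingletonClass σ] (hσ : σ Set.univ = ⊤) :
    ∃ A : ℕ → Set X, (∀ n, MeasurableSet (A n)) ∧ Pairwise (Function.onFun Disjoint A) ∧
      ∀ n, σ (A n) = 1 := by
  -- step: from a measurable set of finite measure, we can add a disjoint piece of measure 1
  have step : ∀ s : Set X, MeasurableSet s → σ s ≠ ⊤ →
      ∃ C : Set X, C ⊆ sᶜ ∧ MeasurableSet C ∧ σ C = 1 := by
    intro s hsm hsfin
    have hcomp : σ sᶜ = ⊤ := by
      by_contra hc
      have := measure_add_measure_compl hsm (μ := σ)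
      rw [hσ] at this
      exact (ENNReal.add_ne_top.2 ⟨hsfin, hc⟩) this
    -- find a finite piece of sᶜ of measure at least 1
    have hsup : σ (⋃ n : ℕ, sᶜ ∩ spanningSets σ n) = ⨆ n : ℕ, σ (sᶜ ∩ spanningSets σ n) := by
      refine Directed.measure_iUnion (fun a b => ?_)
      rcases le_total a b with hab | hab
      · exact ⟨b, inter_subset_inter_right _ (monotone_spanningSets σ hab), le_rfl⟩
      · exact ⟨a, le_rfl, inter_subset_inter_right _ (monotone_spanningSets σ hab)⟩
    rw [← Set.inter_iUnion, iUnion_spanningSets, Set.inter_univ, hcomp] at hsup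
    have : (1:ℝ≥0∞) < ⨆ n : ℕ, σ (sᶜ ∩ spanningSets σ n) := hsup ▸ ENNReal.one_lt_top
    obtain ⟨n, hn⟩ := lt_iSup_iff.1 this
    have hDm : MeasurableSet (sᶜ ∩ spanningSets σ n) :=
      hsm.compl.inter (measurableSet_spanningSets σ n)
    have hDfin : σ (sᶜ ∩ spanningSets σ n) ≠ ⊤ :=
      fun h => (measure_spanningSets_lt_top σ n).ne
        (top_le_iff.1 (h ▸ measure_mono inter_subset_right))
    obtain ⟨C, hCsub, hCm, hC1⟩ := aux_sierpinski σ hDm hDfin hn.le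
    exact ⟨C, hCsub.trans inter_subset_left, hCm, hC1⟩
  -- build an increasing chain B n with σ (B n) = n
  let T := {p : Set X // MeasurableSet p ∧ σ p ≠ ⊤}
  have hstep : ∀ p : T, ∃ q : T, p.1 ⊆ q.1 ∧ σ (q.1 \ p.1) = 1 := by
    rintro ⟨p, hpm, hpfin⟩
    obtain ⟨C, hCsub, hCm, hC1⟩ := step p hpm hpfin
    refine ⟨⟨p ∪ C, hpm.union hCm, ?_⟩, subset_union_left, ?_⟩
    · refine fun h => ?_
      rcases (ENNReal.add_eq_top (a := σ p) (b := σ C)).1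
        (top_le_iff.1 (h ▸ measure_union_le _ _)) with h1 | h2
      · exact hpfin h1
      · rw [hC1] at h2; exact ENNReal.one_ne_top h2
    · have : (p ∪ C) \ p = C := by
        rw [Set.union_diff_left]
        exact sdiff_eq_self_iff_disjoint.2 (Set.disjoint_left.2
          fun x hx hxC => absurd (hCsub hxC) (by simpa using hx))
      rw [this, hC1]
  choose nxt hsub hone using hstep
  let B : ℕ → T := fun n => nxt^[n] ⟨∅, MeasurableSet.empty, by simp⟩
  have hBsucc : ∀ n, B (n+1) = nxt (B n) := fun n => Function.iterate_succ_apply' _ _ _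
  have hBmono : ∀ n, (B n).1 ⊆ (B (n+1)).1 := fun n => by rw [hBsucc]; exact hsub _
  have hBmono' : ∀ {a b}, a ≤ b → (B a).1 ⊆ (B b).1 := by
    intro a b hab
    induction hab with
    | refl => exact subset_rfl
    | @step c hc ih => exact ih.trans (hBmono c)
  refine ⟨fun n => (B (n+1)).1 \ (B n).1,
    fun n => (B (n+1)).2.1.diff (B n).2.1, ?_, fun n => by
      show σ ((B (n+1)).1 \ (B n).1) = 1
      rw [hBsucc]; exact hone _⟩
  intro i j hij
  wlog h : i < j generalizing i j
  · exact (this hij.symm ((hij.lt_or_gt).resolve_left h)).symm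
  refine Set.disjoint_left.2 fun x hxi hxj => ?_
  exact hxj.2 (hBmono' (Nat.succ_le_of_lt h) hxi.1)

lemma aux_ae_nat {Ω : Type*} [MeasurableSpace Ω] (μ : Measure Ω) [IsProbabilityMeasure μ]
    (f : Ω → ℝ≥0∞) (hf : Measurable f) (p : ℕ → ℝ≥0∞) (hsum : ∑' k, p k = 1)
    (hk : ∀ k : ℕ, μ {ω | f ω = (k : ℝ≥0∞)} = p k) :
    ∀ᵐ ω ∂μ, ∃ k : ℕ, f ω = (k : ℝ≥0∞) := by
  have hdisj : Pairwise (Function.onFun Disjoint (fun k : ℕ => {ω | f ω = (k : ℝ≥0∞)})) := by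
    intro i j hij
    refine Set.disjoint_left.2 fun ω hi hj => hij ?_
    exact Nat.cast_injective (hi.symm.trans hj : (i:ℝ≥0∞) = j)
  have hmeas : ∀ k : ℕ, MeasurableSet {ω | f ω = (k : ℝ≥0∞)} :=
    fun k => hf (measurableSet_singleton _)
  have hun : μ (⋃ k : ℕ, {ω | f ω = (k : ℝ≥0∞)}) = 1 := by
    rw [measure_iUnion hdisj hmeas]
    simp_rw [hk]; exact hsum
  have := prob_compl_eq_one_sub (μ := μ) (MeasurableSet.iUnion hmeas)
  rw [hun, tsub_self] at this
  rw [ae_iff]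
  convert this using 2
  ext ω; simp

lemma aux_map_toReal {Ω : Type*} [MeasurableSpace Ω] (μ : Measure Ω) [IsProbabilityMeasure μ]
    (f : Ω → ℝ≥0∞) (hf : Measurable f) (p : ℕ → ℝ≥0∞) (hsum : ∑' k, p k = 1)
    (hk : ∀ k : ℕ, μ {ω | f ω = (k : ℝ≥0∞)} = p k) :
    μ.map (fun ω => (f ω).toReal) = Measure.sum (fun k : ℕ => p k • Measure.dirac ((k : ℕ) : ℝ)) := by
  have hmeas : ∀ k : ℕ, MeasurableSet {ω | f ω = (k : ℝ≥0∞)} :=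
    fun k => hf (measurableSet_singleton _)
  have hae := aux_ae_nat μ f hf p hsum hk
  ext u hu
  rw [Measure.map_apply (hf.ennreal_toReal) hu, Measure.sum_apply _ hu]
  have hsplit : μ ((fun ω => (f ω).toReal) ⁻¹' u) =
      ∑' k : ℕ, μ (((fun ω => (f ω).toReal) ⁻¹' u) ∩ {ω | f ω = (k : ℝ≥0∞)}) := by
    rw [← measure_iUnion ?_ ?_]
    · refine measure_congr ?_
      rw [Filter.eventuallyEq_set]
      filter_upwards [hae] with ω hω
      obtain ⟨k, hk'⟩ := hω
      simp only [Set.mem_iUnion, Set.mem_inter_iff, Set.mem_preimage, Set.mem_setOf_eq]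
      constructor
      · intro h; exact ⟨k, h, hk'⟩
      · rintro ⟨j, hj, _⟩; exact hj
    · intro i j hij
      refine Set.disjoint_left.2 fun ω hi hj => hij ?_
      exact Nat.cast_injective ((hi.2.symm.trans hj.2) : (i:ℝ≥0∞) = j)
    · exact fun k => (hf.ennreal_toReal hu).inter (hmeas k)
  rw [hsplit]
  congr 1
  ext k
  rw [Measure.smul_apply, Measure.dirac_apply' _ hu, smul_eq_mul]
  by_cases hmem : ((k:ℕ):ℝ) ∈ u
  · rw [Set.indicator_of_mem hmem, Pi.one_apply, mul_one, ← hk k]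
    congr 1
    ext ω
    simp only [Set.mem_inter_iff, Set.mem_preimage, Set.mem_setOf_eq, and_iff_right_iff_imp]
    intro hω
    rw [hω]
    simpa using hmem
  · rw [Set.indicator_of_notMem hmem, mul_zero]
    convert measure_empty (μ := μ)
    ext ω
    simp only [Set.mem_inter_iff, Set.mem_preimage, Set.mem_setOf_eq, Set.mem_empty_iff_false,
      iff_false, not_and]
    intro hω hfω
    rw [hfω] at hω
    simp at hω
    exact hmem hω

lemma aux_poisson_sum_one (z : ℝ≥0) :
    ∑' k : ℕ, ENNReal.ofReal (poissonPMFReal z k) = 1 := by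
  have h := (poissonPMFRealSum z).toNNReal (fun n => poissonPMFReal_nonneg)
  have := ENNReal.ofReal_tsum_of_nonneg (fun n => poissonPMFReal_nonneg) (poissonPMFRealSum z).summable
  rw [show (∑' n, poissonPMFReal z n) = 1 from (poissonPMFRealSum z).tsum_eq] at this
  rw [← this, ENNReal.ofReal_one]

lemma aux_poisson_mean_hasSum (z : ℝ≥0) :
    HasSum (fun k : ℕ => poissonPMFReal z k * k) (z : ℝ) := by
  have h1 : HasSum (fun k : ℕ => poissonPMFReal z (k+1) * (k+1)) (z : ℝ) := by
    have : ∀ k : ℕ, poissonPMFReal z (k+1) * (k+1) = (z:ℝ) * poissonPMFReal z k := by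
      intro k
      unfold poissonPMFReal
      rw [Nat.factorial_succ]
      push_cast
      have hfac : ((Nat.factorial k : ℝ)) ≠ 0 := by positivity
      field_simp
      ring
    rw [funext this]
    have := (poissonPMFRealSum z).mul_left (z:ℝ); rw [mul_one] at this; exact this
  have h2 : HasSum (fun k : ℕ => (fun k : ℕ => poissonPMFReal z k * (k:ℝ)) (k+1)) (z:ℝ) := by
    convert h1 using 2 with k
    push_cast; ring
  have h3 := (hasSum_nat_add_iff (f := fun k : ℕ => poissonPMFReal z k * (k:ℝ)) 1).1 h2
  simpa using h3

lemma aux_poisson_mean_ennreal (z : ℝ≥0) :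
    ∑' k : ℕ, ENNReal.ofReal (poissonPMFReal z k) * (k : ℝ≥0∞) = ((z : ℝ≥0) : ℝ≥0∞) := by
  have heq : ∀ k : ℕ, ENNReal.ofReal (poissonPMFReal z k) * (k : ℝ≥0∞) =
      ENNReal.ofReal (poissonPMFReal z k * k) := by
    intro k
    rw [ENNReal.ofReal_mul poissonPMFReal_nonneg, ENNReal.ofReal_natCast]
  simp_rw [heq]
  rw [← ENNReal.ofReal_tsum_of_nonneg (fun k => mul_nonneg poissonPMFReal_nonneg (Nat.cast_nonneg k))
    (aux_poisson_mean_hasSum z).summable, (aux_poisson_mean_hasSum z).tsum_eq]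
  exact ENNReal.ofReal_coe_nnreal

lemma aux_inj {X : Type*} [MeasurableSpace X] [StandardBorelSpace X]
    (σ : Measure X) [SigmaFinite σ] [NullSingletonClass σ] (hσ : σ Set.univ = ⊤)
    (P : ℝ≥0 → Measure (Measure X)) (hPm : Measurable P)
    (hP : ∀ z : ℝ≥0, IsPoissonPP ((z : ℝ≥0∞) • σ) (P z)) :
    ∀ l1 l2 : Measure ℝ≥0, IsProbabilityMeasure l1 → IsProbabilityMeasure l2 →
      l1.bind P = l2.bind P → l1 = l2 := by
  obtain ⟨A, hA, hAdisj, hA1⟩ := aux_unit_sets σ hσ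
  -- the counting functionals
  set N : ℕ → Measure X → ℝ≥0∞ := fun i γ => γ (A i) with hN
  have mN : ∀ i, Measurable (N i) := fun i => Measure.measurable_coe (hA i)
  set Y : ℕ → Measure X → ℝ := fun i γ => (γ (A i)).toReal with hY
  have mY : ∀ i, Measurable (Y i) := fun i => (mN i).ennreal_toReal
  -- the limit functional
  set T : Measure X → ℝ≥0∞ :=
    fun γ => atTop.liminf (fun n : ℕ => (∑ i ∈ Finset.range n, γ (A i)) / (n : ℝ≥0∞)) with hT
  have mT : Measurable T := by
    refine Measurable.liminf fun n => ?_
    exact (Finset.measurable_sum _ (fun i _ => mN i)).div measurable_const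
  -- the key a.e. identification of T under P z
  have hTz : ∀ z : ℝ≥0, ∀ᵐ γ ∂ (P z), T γ = ((z : ℝ≥0) : ℝ≥0∞) := by
    intro z
    haveI : IsProbabilityMeasure (P z) := (hP z).1
    set p : ℕ → ℝ≥0∞ := fun k => ENNReal.ofReal (poissonPMFReal z k) with hp
    have hcount : ∀ (i : ℕ) (k : ℕ), P z {γ | γ (A i) = (k : ℝ≥0∞)} = p k := by
      intro i k
      have hfin : ((z : ℝ≥0∞) • σ) (A i) ≠ ⊤ := by
        rw [Measure.smul_apply, smul_eq_mul, hA1 i, mul_one]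
        exact ENNReal.coe_ne_top
      have h2 := (hP z).2.1 (A i) (hA i) hfin k
      rw [Measure.smul_apply, smul_eq_mul, hA1 i, mul_one, ENNReal.coe_toReal] at h2
      rw [h2, hp]
      simp [poissonPMFReal]
    have hmap : ∀ i, (P z).map (Y i) = Measure.sum (fun k : ℕ => p k • Measure.dirac ((k:ℕ):ℝ)) :=
      fun i => aux_map_toReal (P z) (N i) (mN i) p (aux_poisson_sum_one z) (hcount i)
    have hident : ∀ i, IdentDistrib (Y i) (Y 0) (P z) (P z) :=
      fun i => ⟨(mY i).aemeasurable, (mY 0).aemeasurable, by rw [hmap i, hmap 0]⟩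
    have hindep : Pairwise (Function.onFun (IndepFun · · (P z)) Y) := by
      have hii := (hP z).2.2 ℕ A hA hAdisj
      intro i j hij
      exact (hii.indepFun hij).comp ENNReal.measurable_toReal ENNReal.measurable_toReal
    have hlint : ∫⁻ γ, ENNReal.ofReal (Y 0 γ) ∂ (P z) = ((z : ℝ≥0) : ℝ≥0∞) := by
      have hstep := lintegral_map (μ := P z) (f := fun x : ℝ => ENNReal.ofReal x) (g := Y 0)
        ENNReal.measurable_ofReal (mY 0)
      rw [hmap 0, lintegral_sum_measure] at hstep
      simp_rw [lintegral_smul_measure, lintegral_dirac _ (fun x : ℝ => ENNReal.ofReal x),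
        ENNReal.ofReal_natCast] at hstep
      rw [← hstep]
      exact aux_poisson_mean_ennreal z
    have hint : Integrable (Y 0) (P z) := by
      refine ⟨(mY 0).aestronglyMeasurable, ?_⟩
      rw [hasFiniteIntegral_iff_norm]
      have : ∀ γ, ENNReal.ofReal ‖Y 0 γ‖ = ENNReal.ofReal (Y 0 γ) := by
        intro γ; rw [Real.norm_of_nonneg ENNReal.toReal_nonneg]
      simp_rw [this, hlint]
      exact ENNReal.coe_lt_top
    have hmean : ∫ γ, Y 0 γ ∂ (P z) = (z : ℝ) := by
      rw [integral_eq_lintegral_of_nonneg_ae (Eventually.of_forall fun γ => ENNReal.toReal_nonneg)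
        (mY 0).aestronglyMeasurable, hlint, ENNReal.coe_toReal]
    have hslln := strong_law_ae_real Y hint hindep hident
    rw [hmean] at hslln
    have hnat : ∀ᵐ γ ∂ (P z), ∀ i, ∃ k : ℕ, γ (A i) = (k : ℝ≥0∞) :=
      ae_all_iff.2 fun i => aux_ae_nat (P z) (N i) (mN i) p (aux_poisson_sum_one z) (hcount i)
    filter_upwards [hslln, hnat] with γ h1 h2
    have hofY : ∀ i, ENNReal.ofReal (Y i γ) = γ (A i) := by
      intro i
      obtain ⟨k, hk⟩ := h2 i
      rw [hY]
      simp only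
      rw [ENNReal.ofReal_toReal (by rw [hk]; exact ENNReal.natCast_ne_top k)]
    have hseq : (fun n : ℕ => ENNReal.ofReal ((∑ i ∈ Finset.range n, Y i γ) / (n : ℝ)))
        =ᶠ[atTop] (fun n : ℕ => (∑ i ∈ Finset.range n, γ (A i)) / (n : ℝ≥0∞)) := by
      filter_upwards [eventually_ge_atTop 1] with n hn
      rw [ENNReal.ofReal_div_of_pos (by exact_mod_cast Nat.succ_le_iff.1 hn), ENNReal.ofReal_natCast,
        ENNReal.ofReal_sum_of_nonneg (fun i _ => ENNReal.toReal_nonneg)]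
      congr 1
      exact Finset.sum_congr rfl fun i _ => hofY i
    have htends : Tendsto (fun n : ℕ => (∑ i ∈ Finset.range n, γ (A i)) / (n : ℝ≥0∞)) atTop
        (𝓝 ((z : ℝ≥0) : ℝ≥0∞)) := by
      refine Tendsto.congr' hseq ?_
      have := (ENNReal.continuous_ofReal.tendsto ((z:ℝ))).comp h1
      rwa [ENNReal.ofReal_coe_nnreal] at this
    exact htends.liminf_eq
  -- the pushforward identity
  have hmapT : ∀ l : Measure ℝ≥0, IsProbabilityMeasure l →
      (l.bind P).map T = l.map (fun z : ℝ≥0 => (z : ℝ≥0∞)) := by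
    intro l hl
    ext u hu
    rw [Measure.map_apply mT hu, Measure.bind_apply (mT hu) hPm.aemeasurable,
      Measure.map_apply measurable_coe_nnreal_ennreal hu]
    have hptw : ∀ z : ℝ≥0, P z (T ⁻¹' u) =
        Set.indicator ((fun z : ℝ≥0 => (z : ℝ≥0∞)) ⁻¹' u) (fun _ => 1) z := by
      intro z
      haveI : IsProbabilityMeasure (P z) := (hP z).1
      by_cases hz : ((z : ℝ≥0) : ℝ≥0∞) ∈ u
      · rw [Set.indicator_of_mem (show z ∈ (fun z : ℝ≥0 => (z : ℝ≥0∞)) ⁻¹' u from hz)]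
        have heq : T ⁻¹' u =ᵐ[P z] (Set.univ : Set (Measure X)) := by
          rw [eventuallyEq_set]
          filter_upwards [hTz z] with γ hγ
          simp [Set.mem_preimage, hγ, hz]
        rw [measure_congr heq, measure_univ]
      · rw [Set.indicator_of_notMem (show z ∉ (fun z : ℝ≥0 => (z : ℝ≥0∞)) ⁻¹' u from hz)]
        have heq : T ⁻¹' u =ᵐ[P z] (∅ : Set (Measure X)) := by
          rw [eventuallyEq_set]
          filter_upwards [hTz z] with γ hγ
          simp [Set.mem_preimage, hγ, hz]
        rw [measure_congr heq, measure_empty]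
    rw [lintegral_congr hptw, lintegral_indicator (measurable_coe_nnreal_ennreal hu)]
    simp
  intro l1 l2 h1 h2 heq
  have hmapeq : l1.map (fun z : ℝ≥0 => (z : ℝ≥0∞)) = l2.map (fun z : ℝ≥0 => (z : ℝ≥0∞)) := by
    rw [← hmapT l1 h1, ← hmapT l2 h2, heq]
  haveI := h1; haveI := h2
  refine Measure.ext_of_Iic l1 l2 fun a => ?_
  have hIic : ∀ l : Measure ℝ≥0, l.map (fun z : ℝ≥0 => (z : ℝ≥0∞)) (Set.Iic ((a:ℝ≥0) : ℝ≥0∞)) =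
      l (Set.Iic a) := by
    intro l
    rw [Measure.map_apply measurable_coe_nnreal_ennreal measurableSet_Iic]
    congr 1
    ext x; simp [ENNReal.coe_le_coe]
  rw [← hIic l1, ← hIic l2, hmapeq]

lemma aux_bind_affine {X : Type*} [MeasurableSpace X]
    (P : ℝ≥0 → Measure (Measure X)) (hPm : Measurable P)
    (ν ν' : Measure ℝ≥0) (c c' : ℝ≥0∞) :
    ((c • ν + c' • ν').bind P) = c • ν.bind P + c' • ν'.bind P := by
  ext s hs
  rw [Measure.bind_apply hs hPm.aemeasurable, Measure.add_apply, Measure.smul_apply, Measure.smul_apply,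
    Measure.bind_apply hs hPm.aemeasurable, Measure.bind_apply hs hPm.aemeasurable, lintegral_add_measure,
    lintegral_smul_measure, lintegral_smul_measure, smul_eq_mul, smul_eq_mul]

/-- A mixed Poisson measure `μ_{λ,σ} = ∫ π_{zσ} λ(dz)` (with `σ` an infinite, σ-finite
diffuse intensity) is an extreme point of the convex set of mixed Poisson measures with
intensity proportional to `σ` if and only if `λ = δ_z` for some `z ∈ [0,∞)`, i.e. the
extreme points are exactly the pure Poisson measures `π_{zσ}`. -/
theorem mixedPoisson_extreme_iff_pure
    {X : Type*} [MeasurableSpace X] [StandardBorelSpace X]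
    (σ : Measure X) [SigmaFinite σ] [NullSingletonClass σ] (hσ : σ Set.univ = ⊤)
    (P : ℝ≥0 → Measure (Measure X)) (hPm : Measurable P)
    (hP : ∀ z : ℝ≥0, IsPoissonPP ((z : ℝ≥0∞) • σ) (P z))
    (lam : Measure ℝ≥0) [IsProbabilityMeasure lam] :
    MeasureExtremePoint
        {μ : Measure (Measure X) |
          ∃ lam' : Measure ℝ≥0, IsProbabilityMeasure lam' ∧ μ = lam'.bind P}
        (lam.bind P)
      ↔ ∃ z : ℝ≥0, lam = MeasureTheory.Measure.dirac z := by
  constructor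
  · intro hext
    by_contra hnd
    push_neg at hnd
    have hB : ∃ B : Set ℝ≥0, MeasurableSet B ∧ 0 < lam B ∧ lam B < 1 := by
      by_contra hno
      push_neg at hno
      have h01 : ∀ B : Set ℝ≥0, MeasurableSet B → lam B = 0 ∨ lam B = 1 := by
        intro B hBm
        rcases eq_or_lt_of_le (show (0:ℝ≥0∞) ≤ lam B from zero_le) with h0 | h0
        · exact Or.inl h0.symm
        · exact Or.inr (le_antisymm prob_le_one (hno B hBm h0))
      obtain ⟨z, hz⟩ := aux_zero_one lam h01
      exact hnd z hz
    obtain ⟨B, hBm, h0, h1⟩ := hB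
    set t := lam B with ht
    have htne : t ≠ ⊤ := (h1.trans ENNReal.one_lt_top).ne
    have ht1pos : 0 < 1 - t := tsub_pos_of_lt h1
    have ht1ne : (1 - t) ≠ ⊤ := ((tsub_le_self).trans_lt ENNReal.one_lt_top).ne
    set l1 : Measure ℝ≥0 := t⁻¹ • lam.restrict B with hl1def
    set l2 : Measure ℝ≥0 := (1 - t)⁻¹ • lam.restrict Bᶜ with hl2def
    have hcompl : lam Bᶜ = 1 - t := by
      rw [measure_compl hBm (measure_ne_top lam B), measure_univ]
    have hl1 : IsProbabilityMeasure l1 := ⟨by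
      rw [hl1def, Measure.smul_apply, Measure.restrict_apply_univ, smul_eq_mul,
        ENNReal.inv_mul_cancel h0.ne' htne]⟩
    have hl2 : IsProbabilityMeasure l2 := ⟨by
      rw [hl2def, Measure.smul_apply, Measure.restrict_apply_univ, smul_eq_mul, hcompl,
        ENNReal.inv_mul_cancel ht1pos.ne' ht1ne]⟩
    have hdecomp : lam = t • l1 + (1 - t) • l2 := by
      rw [hl1def, hl2def, smul_smul, smul_smul, ENNReal.mul_inv_cancel h0.ne' htne,
        ENNReal.mul_inv_cancel ht1pos.ne' ht1ne, one_smul, one_smul,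
        Measure.restrict_add_restrict_compl hBm]
    have hbind : lam.bind P = t • l1.bind P + (1 - t) • l2.bind P := by
      conv_lhs => rw [hdecomp]
      exact aux_bind_affine P hPm l1 l2 t (1 - t)
    obtain ⟨he1, _⟩ := hext.2 (l1.bind P) ⟨l1, hl1, rfl⟩ (l2.bind P) ⟨l2, hl2, rfl⟩ t h0 h1 hbind
    have heql : l1 = lam := aux_inj σ hσ P hPm hP l1 lam hl1 inferInstance he1
    have hc1 : l1 Bᶜ = 0 := by
      rw [hl1def, Measure.smul_apply, Measure.restrict_apply hBm.compl,
        Set.compl_inter_self, measure_empty, smul_eq_mul, mul_zero]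
    rw [heql, hcompl] at hc1
    exact ht1pos.ne' hc1
  · rintro ⟨z, rfl⟩
    refine ⟨⟨Measure.dirac z, inferInstance, rfl⟩, ?_⟩
    rintro μ₁ ⟨l1, hl1, rfl⟩ μ₂ ⟨l2, hl2, rfl⟩ t ht0 ht1 heq
    haveI := hl1; haveI := hl2
    have ht1pos : 0 < 1 - t := tsub_pos_of_lt ht1
    have hν : IsProbabilityMeasure (t • l1 + (1 - t) • l2) := ⟨by
      rw [Measure.add_apply, Measure.smul_apply, Measure.smul_apply, measure_univ, measure_univ,
        smul_eq_mul, smul_eq_mul, mul_one, mul_one, add_tsub_cancel_of_le ht1.le]⟩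
    have heq2 : (Measure.dirac z).bind P = (t • l1 + (1 - t) • l2).bind P := by
      rw [aux_bind_affine P hPm l1 l2 t (1 - t)]
      exact heq
    have hdd : Measure.dirac z = t • l1 + (1 - t) • l2 :=
      aux_inj σ hσ P hPm hP _ _ inferInstance hν heq2
    have hcompl0 : (t • l1 + (1 - t) • l2) ({z}ᶜ) = 0 := by
      rw [← hdd, Measure.dirac_apply' _ (MeasurableSet.singleton z).compl]
      simp
    rw [Measure.add_apply, Measure.smul_apply, Measure.smul_apply, smul_eq_mul, smul_eq_mul,
      add_eq_zero] at hcompl0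
    obtain ⟨hz1, hz2⟩ := hcompl0
    rw [mul_eq_zero] at hz1 hz2
    have hl1z : l1 ({z}ᶜ) = 0 := hz1.resolve_left ht0.ne'
    have hl2z : l2 ({z}ᶜ) = 0 := hz2.resolve_left ht1pos.ne'
    have hd1 : l1 = Measure.dirac z := by
      refine aux_eq_dirac l1 ?_
      have := measure_add_measure_compl (μ := l1) (MeasurableSet.singleton z)
      rw [hl1z, add_zero, measure_univ] at this
      exact this
    have hd2 : l2 = Measure.dirac z := by
      refine aux_eq_dirac l2 ?_
      have := measure_add_measure_compl (μ := l2) (MeasurableSet.singleton z)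
      rw [hl2z, add_zero, measure_univ] at this
      exact this
    exact ⟨by rw [hd1], by rw [hd2]⟩
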